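/- Let P : ℕ → ℕ be a sequence of primes with S(P) = {q₁,…,q_t} nonempty and finite, and let k be a positive integer divisible by q₁·q₂⋯q_t. Then the identity e is the only periodic point of h_P^k on Σ_P. -/

import Mathlib

/-- The `P`-adic solenoid: sequences on the unit circle with `z n = z (n+1) ^ P n`. -/
def Solenoid (P : ℕ → ℕ) : Set (ℕ → ℂ) :=
  {z | (∀ n, ‖z n‖ = 1) ∧ ∀ n, z n = z (n + 1) ^ P n}

/-- The coordinatewise `k`-th power map. -/
def hpow (k : ℕ) (z : ℕ → ℂ) : ℕ → ℂ := fun n => z n ^ k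

lemma hpow_iter (k : ℕ) (z : ℕ → ℂ) : ∀ m n, ((hpow k)^[m] z) n = z n ^ (k ^ m) := by
  intro m
  induction m generalizing z with
  | zero => intro n; simp
  | succ m ih =>
    intro n
    rw [Function.iterate_succ_apply, ih (hpow k z) n]
    simp only [hpow, ← pow_mul, pow_succ']

/-- If the set `S(P)` of primes occurring only finitely often in `P` is nonempty and
finite and every member of `S(P)` divides `k`, then the identity is the only periodic
point of the coordinatewise `k`-th power map. -/
theorem stmt_15 (P : ℕ → ℕ) (hP : ∀ n, (P n).Prime) (k : ℕ) (hk : 0 < k)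
    (hfin : {q : ℕ | q.Prime ∧ {n | P n = q}.Finite}.Finite)
    (hne : {q : ℕ | q.Prime ∧ {n | P n = q}.Finite}.Nonempty)
    (hdvd : ∀ q ∈ {q : ℕ | q.Prime ∧ {n | P n = q}.Finite}, q ∣ k) :
    ∀ z ∈ Solenoid P, (∃ m : ℕ, 1 ≤ m ∧ (hpow k)^[m] z = z) → z = 1 := by
  intro z hz hper
  obtain ⟨habs, hrel⟩ := hz
  obtain ⟨m, hm1, hmz⟩ := hper
  -- k ≥ 2
  obtain ⟨q0, hq0⟩ := hne
  have hk2 : 2 ≤ k := le_trans hq0.1.two_le (Nat.le_of_dvd hk (hdvd q0 hq0))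
  set N : ℕ := k ^ m - 1 with hN
  have hNk : N + 1 = k ^ m := by
    have : 1 ≤ k ^ m := Nat.one_le_pow _ _ hk
    omega
  have hN1 : 1 ≤ N := by
    have : 2 ≤ k ^ m := by
      calc 2 ≤ k := hk2
      _ = k ^ 1 := (pow_one k).symm
      _ ≤ k ^ m := Nat.pow_le_pow_right hk hm1
    omega
  have hzne : ∀ n, z n ≠ 0 := by
    intro n h
    have := habs n
    rw [h] at this
    simp at this
  -- every coordinate has z n ^ N = 1
  have hpowN : ∀ n, z n ^ N = 1 := by
    intro n
    have h1 : z n ^ (k ^ m) = z n := by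
      have := congrFun hmz n
      rwa [hpow_iter] at this
    have h2 : z n ^ N * z n = 1 * z n := by
      rw [one_mul, ← pow_succ, hNk, h1]
    exact mul_right_cancel₀ (hzne n) h2
  have hfo : ∀ n, IsOfFinOrder (z n) :=
    fun n => isOfFinOrder_iff_pow_eq_one.mpr ⟨N, hN1, hpowN n⟩
  set d : ℕ → ℕ := fun n => orderOf (z n) with hd
  have hdpos : ∀ n, 0 < d n := fun n => (hfo n).orderOf_pos
  have hdN : ∀ n, d n ∣ N := fun n => orderOf_dvd_of_pow_eq_one (hpowN n)
  -- d n ∣ d (n+1)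
  have hstep : ∀ n, d n ∣ d (n + 1) := by
    intro n
    apply orderOf_dvd_of_pow_eq_one
    rw [hrel n, ← pow_mul, mul_comm, pow_mul, pow_orderOf_eq_one, one_pow]
  have hmono : ∀ a b, a ≤ b → d a ∣ d b := by
    intro a b hab
    induction b, hab using Nat.le_induction with
    | base => rfl
    | succ b hb ih => exact ih.trans (hstep b)
  -- suppose z ≠ 1
  by_contra hz1
  have hexn : ∃ n0, z n0 ≠ 1 := by
    by_contra h
    push_neg at h
    exact hz1 (funext fun n => h n)
  obtain ⟨n0, hn0⟩ := hexn
  have hdn0 : d n0 ≠ 1 := fun h => hn0 (orderOf_eq_one_iff.mp h)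
  obtain ⟨q, hq, hqd⟩ := Nat.exists_prime_and_dvd hdn0
  -- q ∤ k
  have hqk : ¬ q ∣ k := by
    intro h
    have h1 : q ∣ N := hqd.trans (hdN n0)
    have h2 : q ∣ N + 1 := hNk ▸ h.trans (dvd_pow_self k (by omega))
    have h3 : q ∣ 1 := by simpa using Nat.dvd_sub h2 h1
    exact hq.one_lt.ne' (Nat.dvd_one.mp h3)
  -- q occurs infinitely often in P
  have hinf : {n | P n = q}.Infinite := by
    intro hfin'
    exact hqk (hdvd q ⟨hq, hfin'⟩)
  -- key claim: q-powers divide some d n, unboundedly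
  have hclaim : ∀ j : ℕ, ∃ n, q ^ (j + 1) ∣ d n := by
    intro j
    induction j with
    | zero => exact ⟨n0, by simpa using hqd⟩
    | succ j ih =>
      obtain ⟨n, hn⟩ := ih
      obtain ⟨mm, hmm, hnm⟩ := hinf.exists_gt n
      have hdm : q ^ (j + 1) ∣ d mm := hn.trans (hmono n mm hnm.le)
      have hqdm : q ∣ d mm := (dvd_pow_self q (Nat.succ_ne_zero j)).trans hdm
      refine ⟨mm + 1, ?_⟩
      -- z mm = z (mm+1) ^ q, and q ∣ d mm ∣ d (mm+1), so q * d mm ∣ d (mm+1)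
      have hq1 : q ∣ d (mm + 1) := hqdm.trans (hstep mm)
      have hzmm : z mm ^ (d (mm + 1) / q) = 1 := by
        have hPq : P mm = q := hmm
        rw [hrel mm, hPq, ← pow_mul, Nat.mul_div_cancel' hq1, pow_orderOf_eq_one]
      have hdvd2 : d mm ∣ d (mm + 1) / q := orderOf_dvd_of_pow_eq_one hzmm
      have : q * d mm ∣ d (mm + 1) := by
        have := Nat.mul_dvd_mul_left q hdvd2
        rwa [Nat.mul_div_cancel' hq1] at this
      calc q ^ (j + 2) = q * q ^ (j + 1) := by ring
        _ ∣ q * d mm := Nat.mul_dvd_mul_left q hdm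
        _ ∣ d (mm + 1) := this
  -- contradiction with d n ∣ N
  obtain ⟨n, hn⟩ := hclaim N
  have hle : q ^ (N + 1) ≤ N := Nat.le_of_dvd (by omega) (hn.trans (hdN n))
  have hlt : N < q ^ (N + 1) := by
    calc N < q ^ N := Nat.lt_pow_self hq.one_lt
    _ ≤ q ^ (N + 1) := Nat.pow_le_pow_right hq.pos (by omega)
  omega
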